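/- Suppose (x*, y*) is a saddle-point of f. Then for every k ∈ ℕ: f(x*, y*) − f(x̂_k, ŷ_k) ≤ (1/(k+1)) ∑_{i=0}^{k} (1/(2τ_i))(‖x̂_k − x^i‖² − ‖x̂_k − x^{i+1}‖² − ‖x^i − x^{i+1}‖²) + (1/(k+1)) ∑_{i=0}^{k} (1/(2σ_i))(‖y* − y^i‖² − ‖y* − y^{i+1}‖² − ‖y^i − y^{i+1}‖²) + (1/(k+1)) ∑_{i=0}^{k} ( f(x^{i+1}, y*) − f(x̄^i, y*) + f(x̄^i, y^{i+1}) − f(x̂_k, y^{i+1}) − f(x^{i+1}, ȳ^{i+1}) + f(x̂_k, ȳ^{i+1}) ). -/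
import Mathlib


open RealInnerProductSpace

/-- Proposition 3.8(ii): upper bound for `f(x*, y*) − f(x̂ₖ, ŷₖ)`. -/
theorem stmt_8
    {H₁ : Type*} [NormedAddCommGroup H₁] [InnerProductSpace ℝ H₁] [CompleteSpace H₁]
    {H₂ : Type*} [NormedAddCommGroup H₂] [InnerProductSpace ℝ H₂] [CompleteSpace H₂]
    (X : Set H₁) (Y : Set H₂)
    (hXne : X.Nonempty) (hXcl : IsClosed X) (hXcv : Convex ℝ X)
    (hYne : Y.Nonempty) (hYcl : IsClosed Y) (hYcv : Convex ℝ Y)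
    (f : H₁ → H₂ → ℝ)
    (hfcvx : ∀ y ∈ Y, ConvexOn ℝ X (fun x => f x y))
    (hfccv : ∀ x ∈ X, ConcaveOn ℝ Y (fun y => f x y))
    (xs : ℕ → H₁) (ys : ℕ → H₂) (hxX : ∀ k, xs k ∈ X) (hyY : ∀ k, ys k ∈ Y)
    (xbs : ℕ → H₁) (ybs : ℕ → H₂)
    (τs σs : ℕ → ℝ) (hτ : ∀ k, 0 < τs k) (hσ : ∀ k, 0 < σs k)
    (hA : ∀ k, ∀ y ∈ Y,
      (1/(2*σs k)) * (‖ys k - ys (k+1)‖^2 + ‖y - ys (k+1)‖^2 - ‖y - ys k‖^2)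
        + f (xbs k) y - f (xbs k) (ys (k+1)) ≤ 0)
    (hB : ∀ k, ∀ x ∈ X,
      (1/(2*τs k)) * (‖xs k - xs (k+1)‖^2 + ‖x - xs (k+1)‖^2 - ‖x - xs k‖^2)
        + f (xs (k+1)) (ybs (k+1)) - f x (ybs (k+1)) ≤ 0)
    (xstar : H₁) (ystar : H₂) (hxstar : xstar ∈ X) (hystar : ystar ∈ Y)
    (hsaddle : ∀ x ∈ X, ∀ y ∈ Y, f xstar y ≤ f xstar ystar ∧ f xstar ystar ≤ f x ystar)
    (k : ℕ)
    (xhat : H₁) (yhat : H₂)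
    (hxhat : xhat = (((k : ℝ)+1)⁻¹) • ∑ i ∈ Finset.range (k+1), xs (i+1))
    (hyhat : yhat = (((k : ℝ)+1)⁻¹) • ∑ i ∈ Finset.range (k+1), ys (i+1)) :
    f xstar ystar - f xhat yhat
    ≤ (((k : ℝ)+1)⁻¹) * ∑ i ∈ Finset.range (k+1),
        (1/(2*τs i)) * (‖xhat - xs i‖^2 - ‖xhat - xs (i+1)‖^2 - ‖xs i - xs (i+1)‖^2)
      + (((k : ℝ)+1)⁻¹) * ∑ i ∈ Finset.range (k+1),
        (1/(2*σs i)) * (‖ystar - ys i‖^2 - ‖ystar - ys (i+1)‖^2 - ‖ys i - ys (i+1)‖^2)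
      + (((k : ℝ)+1)⁻¹) * ∑ i ∈ Finset.range (k+1),
        (f (xs (i+1)) ystar - f (xbs i) ystar + f (xbs i) (ys (i+1)) - f xhat (ys (i+1))
          - f (xs (i+1)) (ybs (i+1)) + f xhat (ybs (i+1))) := by
  set c : ℝ := ((k : ℝ)+1)⁻¹ with hc
  have hkpos : (0:ℝ) < (k:ℝ)+1 := by positivity
  have hcpos : 0 < c := by positivity
  have hwsum : ∑ _i ∈ Finset.range (k+1), c = 1 := by
    simp [Finset.sum_const, hc]
    field_simp
  have hw0 : ∀ i ∈ Finset.range (k+1), (0:ℝ) ≤ c := fun i _ => hcpos.le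
  have hxhat' : xhat = ∑ i ∈ Finset.range (k+1), c • xs (i+1) := by
    rw [hxhat, Finset.smul_sum]
  have hyhat' : yhat = ∑ i ∈ Finset.range (k+1), c • ys (i+1) := by
    rw [hyhat, Finset.smul_sum]
  have hxhatX : xhat ∈ X := by
    rw [hxhat']
    exact hXcv.sum_mem hw0 hwsum (fun i _ => hxX (i+1))
  have hyhatY : yhat ∈ Y := by
    rw [hyhat']
    exact hYcv.sum_mem hw0 hwsum (fun i _ => hyY (i+1))
  -- Jensen for convex part
  have hJ1 : f xhat ystar ≤ ∑ i ∈ Finset.range (k+1), c * f (xs (i+1)) ystar := by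
    have := (hfcvx ystar hystar).map_sum_le hw0 hwsum (fun i _ => hxX (i+1))
    rw [hxhat']; exact this
  have hJ2 : ∑ i ∈ Finset.range (k+1), c * f xhat (ys (i+1)) ≤ f xhat yhat := by
    have := (hfccv xhat hxhatX).le_map_sum hw0 hwsum (fun i _ => hyY (i+1))
    rw [hyhat']; exact this
  -- pointwise inequality
  have hpt : ∀ i ∈ Finset.range (k+1),
      f (xs (i+1)) ystar - f xhat (ys (i+1))
      ≤ (1/(2*τs i)) * (‖xhat - xs i‖^2 - ‖xhat - xs (i+1)‖^2 - ‖xs i - xs (i+1)‖^2)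
        + (1/(2*σs i)) * (‖ystar - ys i‖^2 - ‖ystar - ys (i+1)‖^2 - ‖ys i - ys (i+1)‖^2)
        + (f (xs (i+1)) ystar - f (xbs i) ystar + f (xbs i) (ys (i+1)) - f xhat (ys (i+1))
          - f (xs (i+1)) (ybs (i+1)) + f xhat (ybs (i+1))) := by
    intro i _
    have hAi := hA i ystar hystar
    have hBi := hB i xhat hxhatX
    have e1 : (1/(2*τs i)) * (‖xhat - xs i‖^2 - ‖xhat - xs (i+1)‖^2 - ‖xs i - xs (i+1)‖^2)
        = -((1/(2*τs i)) * (‖xs i - xs (i+1)‖^2 + ‖xhat - xs (i+1)‖^2 - ‖xhat - xs i‖^2)) := by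
      ring
    have e2 : (1/(2*σs i)) * (‖ystar - ys i‖^2 - ‖ystar - ys (i+1)‖^2 - ‖ys i - ys (i+1)‖^2)
        = -((1/(2*σs i)) * (‖ys i - ys (i+1)‖^2 + ‖ystar - ys (i+1)‖^2 - ‖ystar - ys i‖^2)) := by
      ring
    linarith
  have hsum : ∑ i ∈ Finset.range (k+1), (f (xs (i+1)) ystar - f xhat (ys (i+1)))
      ≤ ∑ i ∈ Finset.range (k+1),
        ((1/(2*τs i)) * (‖xhat - xs i‖^2 - ‖xhat - xs (i+1)‖^2 - ‖xs i - xs (i+1)‖^2)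
        + (1/(2*σs i)) * (‖ystar - ys i‖^2 - ‖ystar - ys (i+1)‖^2 - ‖ys i - ys (i+1)‖^2)
        + (f (xs (i+1)) ystar - f (xbs i) ystar + f (xbs i) (ys (i+1)) - f xhat (ys (i+1))
          - f (xs (i+1)) (ybs (i+1)) + f xhat (ybs (i+1)))) :=
    Finset.sum_le_sum hpt
  have hmul : c * ∑ i ∈ Finset.range (k+1), (f (xs (i+1)) ystar - f xhat (ys (i+1)))
      ≤ c * ∑ i ∈ Finset.range (k+1),
        ((1/(2*τs i)) * (‖xhat - xs i‖^2 - ‖xhat - xs (i+1)‖^2 - ‖xs i - xs (i+1)‖^2)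
        + (1/(2*σs i)) * (‖ystar - ys i‖^2 - ‖ystar - ys (i+1)‖^2 - ‖ys i - ys (i+1)‖^2)
        + (f (xs (i+1)) ystar - f (xbs i) ystar + f (xbs i) (ys (i+1)) - f xhat (ys (i+1))
          - f (xs (i+1)) (ybs (i+1)) + f xhat (ybs (i+1)))) :=
    mul_le_mul_of_nonneg_left hsum hcpos.le
  have hsaddle1 : f xstar ystar ≤ f xhat ystar := (hsaddle xhat hxhatX yhat hyhatY).2
  have hsplit : c * ∑ i ∈ Finset.range (k+1), (f (xs (i+1)) ystar - f xhat (ys (i+1)))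
      = (∑ i ∈ Finset.range (k+1), c * f (xs (i+1)) ystar)
        - (∑ i ∈ Finset.range (k+1), c * f xhat (ys (i+1))) := by
    rw [Finset.mul_sum, ← Finset.sum_sub_distrib]
    exact Finset.sum_congr rfl (fun i _ => by ring)
  have hrhs : c * ∑ i ∈ Finset.range (k+1),
        ((1/(2*τs i)) * (‖xhat - xs i‖^2 - ‖xhat - xs (i+1)‖^2 - ‖xs i - xs (i+1)‖^2)
        + (1/(2*σs i)) * (‖ystar - ys i‖^2 - ‖ystar - ys (i+1)‖^2 - ‖ys i - ys (i+1)‖^2)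
        + (f (xs (i+1)) ystar - f (xbs i) ystar + f (xbs i) (ys (i+1)) - f xhat (ys (i+1))
          - f (xs (i+1)) (ybs (i+1)) + f xhat (ybs (i+1))))
      = c * ∑ i ∈ Finset.range (k+1),
        (1/(2*τs i)) * (‖xhat - xs i‖^2 - ‖xhat - xs (i+1)‖^2 - ‖xs i - xs (i+1)‖^2)
      + c * ∑ i ∈ Finset.range (k+1),
        (1/(2*σs i)) * (‖ystar - ys i‖^2 - ‖ystar - ys (i+1)‖^2 - ‖ys i - ys (i+1)‖^2)
      + c * ∑ i ∈ Finset.range (k+1),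
        (f (xs (i+1)) ystar - f (xbs i) ystar + f (xbs i) (ys (i+1)) - f xhat (ys (i+1))
          - f (xs (i+1)) (ybs (i+1)) + f xhat (ybs (i+1))) := by
    rw [Finset.sum_add_distrib, Finset.sum_add_distrib]; ring
  rw [hsplit, hrhs] at hmul
  linarith
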